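/- An R-module M is w-split if and only if for every epimorphism g: B → C of R-modules, the cokernel of the induced map g_*: Hom_R(M,B) → Hom_R(M,C) is GV-torsion. -/

import Mathlib

open CategoryTheory

universe u

section Defs
variable (R : Type u) [CommRing R]

/-- `J` is a Glaz–Vasconcelos ideal (GV-ideal): finitely generated and the natural map
`R → Hom_R(J, R)`, `r ↦ (x ↦ r•x)`, is an isomorphism. -/
def IsGVIdeal (J : Ideal R) : Prop :=
  J.FG ∧ Function.Bijective fun r : R =>
    ((LinearMap.lsmul R R r).comp J.subtype : J →ₗ[R] R)

variable (M : Type u) [AddCommGroup M] [Module R M]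

/-- `M` is GV-torsion: every element is killed by some GV-ideal. -/
def IsGVTorsion : Prop :=
  ∀ x : M, ∃ J : Ideal R, IsGVIdeal R J ∧ ∀ a ∈ J, a • x = 0

/-- `M` is GV-torsionfree: no nonzero element is killed by a GV-ideal. -/
def IsGVTorsionFree : Prop :=
  ∀ x : M, (∃ J : Ideal R, IsGVIdeal R J ∧ ∀ a ∈ J, a • x = 0) → x = 0

/-- The w-splitting condition on the epimorphism `g` of a short exact sequence:
there are a GV-ideal `⟨d₁,…,dₙ⟩` and maps `hₖ` with `g ∘ hₖ = (dₖ•·)`. -/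
def IsWSplitSeq {B C : Type u} [AddCommGroup B] [Module R B] [AddCommGroup C] [Module R C]
    (g : B →ₗ[R] C) : Prop :=
  ∃ (n : ℕ) (d : Fin n → R), IsGVIdeal R (Ideal.span (Set.range d)) ∧
    ∃ h : Fin n → (C →ₗ[R] B), ∀ k, ∀ c : C, g (h k c) = d k • c

/-- `M` is a w-split module: some short exact sequence `0 → K → P → M → 0` with
`P` projective is w-split. -/
def IsWSplitModule : Prop :=
  ∃ (P : Type u) (_ : AddCommGroup P) (_ : Module R P), Module.Projective R P ∧
    ∃ g : P →ₗ[R] M, Function.Surjective g ∧ IsWSplitSeq R g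

/-- The Ext group `Ext^n_R(M, N)` as an object of `ModuleCat R`. -/
noncomputable def extMod (n : ℕ) (N : Type u) [AddCommGroup N] [Module R N] : ModuleCat.{u} R :=
  ((Ext R (ModuleCat.{u} R) n).obj (Opposite.op (ModuleCat.of R M))).obj (ModuleCat.of R N)

/-- `M` is a w-module: GV-torsionfree and `Ext¹_R(R/J, M) = 0` for all GV-ideals `J`. -/
def IsWModule : Prop :=
  IsGVTorsionFree R M ∧
    ∀ J : Ideal R, IsGVIdeal R J → Subsingleton (extMod R (R ⧸ J) 1 M)

/-- `ι : M →ₗ E` exhibits `E` as a w-envelope `M_w` of the GV-torsionfree module `M`: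
`E` is a w-module containing `M` with GV-torsion quotient `E/M`. -/
def IsWEnvelope (E : Type u) [AddCommGroup E] [Module R E] (ι : M →ₗ[R] E) : Prop :=
  Function.Injective ι ∧ IsWModule R E ∧ IsGVTorsion R (E ⧸ LinearMap.range ι)

/-- `M` is w-projective: `Ext¹_R(L(M), N)` is GV-torsion for every GV-torsionfree
w-module `N`, where `L(M) = (M/tor_GV(M))_w`. -/
def IsWProjective : Prop :=
  ∀ (T : Submodule R M),
    (∀ x : M, x ∈ T ↔ ∃ J : Ideal R, IsGVIdeal R J ∧ ∀ a ∈ J, a • x = 0) →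
    ∀ (L : Type u) (_ : AddCommGroup L) (_ : Module R L) (ι : (M ⧸ T) →ₗ[R] L),
      IsWEnvelope R (M ⧸ T) L ι →
      ∀ (N : Type u) (_ : AddCommGroup N) (_ : Module R N),
        IsGVTorsionFree R N → IsWModule R N → IsGVTorsion R (extMod R L 1 N)

/-- `I` is a w-ideal: `I_w = I`, i.e. any `x` with `Jx ⊆ I` for some GV-ideal `J`
already lies in `I`. -/
def IsWIdeal (I : Ideal R) : Prop :=
  ∀ x : R, (∃ J : Ideal R, IsGVIdeal R J ∧ ∀ a ∈ J, a * x ∈ I) → x ∈ I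

/-- `I` is a maximal w-ideal: maximal among proper w-ideals of `R`. -/
def IsMaximalWIdeal (I : Ideal R) : Prop :=
  I ≠ ⊤ ∧ IsWIdeal R I ∧ ∀ I' : Ideal R, IsWIdeal R I' → I' ≠ ⊤ → I ≤ I' → I = I'

end Defs


/-- `M` is w-split iff for every epimorphism `g : B → C` the cokernel of
`g_* : Hom_R(M,B) → Hom_R(M,C)` is GV-torsion. -/
theorem stmt5 {R : Type u} [CommRing R] {M : Type u} [AddCommGroup M] [Module R M] :
    IsWSplitModule R M ↔
      ∀ (B C : Type u) (_ : AddCommGroup B) (_ : Module R B) (_ : AddCommGroup C)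
        (_ : Module R C) (g : B →ₗ[R] C), Function.Surjective g →
        IsGVTorsion R
          ((M →ₗ[R] C) ⧸ LinearMap.range ((LinearMap.llcomp R M B C :
              (B →ₗ[R] C) →ₗ[R] (M →ₗ[R] B) →ₗ[R] M →ₗ[R] C) g)) := by
  constructor
  · rintro ⟨P, _, _, hP, g0, hg0, n, d, hJ, h, hh⟩ B C _ _ _ _ g hg φq
    obtain ⟨φ, rfl⟩ := Submodule.Quotient.mk_surjective _ φq
    refine ⟨Ideal.span (Set.range d), hJ, fun a ha => ?_⟩
    rw [← Submodule.Quotient.mk_smul, Submodule.Quotient.mk_eq_zero]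
    have key : Ideal.span (Set.range d) ≤
        (LinearMap.range ((LinearMap.llcomp R M B C :
              (B →ₗ[R] C) →ₗ[R] (M →ₗ[R] B) →ₗ[R] M →ₗ[R] C) g)).comap
          (LinearMap.toSpanSingleton R _ φ) := by
      rw [Ideal.span_le]
      rintro _ ⟨k, rfl⟩
      obtain ⟨ψ, hψ⟩ := Module.projective_lifting_property g (φ ∘ₗ g0) hg
      refine ⟨ψ ∘ₗ h k, ?_⟩
      ext m
      have h1 : g (ψ (h k m)) = φ (g0 (h k m)) := LinearMap.congr_fun hψ (h k m)
      simp [LinearMap.llcomp, LinearMap.toSpanSingleton, h1, hh k m, map_smul]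
    exact key ha
  · intro H
    set g0 : (M →₀ R) →ₗ[R] M := Finsupp.linearCombination R (id : M → M) with hg0def
    have hsurj : Function.Surjective g0 := fun m =>
      ⟨Finsupp.single m 1, by simp [hg0def]⟩
    obtain ⟨J, hJ, hJkill⟩ := H (M →₀ R) M inferInstance inferInstance inferInstance
      inferInstance g0 hsurj (Submodule.Quotient.mk LinearMap.id)
    obtain ⟨n, d, hd⟩ := Submodule.fg_iff_exists_fin_generating_family.mp hJ.1
    have key : ∀ k : Fin n, ∃ h : M →ₗ[R] (M →₀ R), ∀ c, g0 (h c) = d k • c := by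
      intro k
      have hk := hJkill (d k) (by exact hd ▸ Submodule.subset_span ⟨k, rfl⟩)
      rw [← Submodule.Quotient.mk_smul, Submodule.Quotient.mk_eq_zero] at hk
      obtain ⟨h, hh⟩ := hk
      exact ⟨h, fun c => by
        have := LinearMap.congr_fun hh c
        simpa using this⟩
    choose h hh using key
    exact ⟨M →₀ R, inferInstance, inferInstance, inferInstance, g0, hsurj,
      n, d, by rwa [show Ideal.span (Set.range d) = J from hd], h, hh⟩
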